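/- arXiv:1710.11243 — 7 statements merged into one kernel-verified Lean document; each statement's English description precedes it below -/
import Mathlib

section
/- Suppose λ₁, λ₂ ∈ Λ are dominant and λ₁ − λ₂ lies in the ℤ-span of α₁^∨, …, α_r^∨. Then there exists a dominant element μ ∈ Λ with μ ≤ λ₁ and μ ≤ λ₂ such that (λ₁ − D) ∩ (λ₂ − D) = μ − D as subsets of Λ ⊗ ℚ. In particular, P_{λ₁} ∩ P_{λ₂} = P_μ. (Paper's Lemma on the intersection of dominant weight polytopes, Lemma "polytope-intersection-lem".) -/
/-!
Statement 0: intersection of dominant weight polytopes (paper's Lemma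
`polytope-intersection-lem`).
-/

/-- The cone `D ⊆ Λ ⊗ ℚ` of nonnegative rational linear combinations of the
simple coroots (viewed inside the ℚ-vector space `V` via `ι : Λ → V`). -/
def corootCone {Λ V : Type*} [AddCommGroup Λ] [AddCommGroup V] [Module ℚ V]
    {r : ℕ} (ι : Λ →+ V) (coroot : Fin r → Λ) : Set V :=
  {v | ∃ c : Fin r → ℚ, (∀ i, 0 ≤ c i) ∧ v = ∑ i, c i • ι (coroot i)}

/-- `μ ≤ λ` : `λ - μ` is a nonnegative integral linear combination of the
simple coroots. -/
def leZ {Λ : Type*} [AddCommGroup Λ] {r : ℕ} (coroot : Fin r → Λ)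
    (μ lam : Λ) : Prop :=
  ∃ c : Fin r → ℕ, lam - μ = ∑ i, (c i : ℤ) • coroot i

/-- The dominant weight polytope `P_λ = {ν ∈ Λ ⊗ ℚ : ν dominant, ν ≤_ℚ λ}`. -/
def Pset {Λ V : Type*} [AddCommGroup Λ] [AddCommGroup V] [Module ℚ V]
    {r : ℕ} (ι : Λ →+ V) (coroot : Fin r → Λ)
    (rootQ : Fin r → V →ₗ[ℚ] ℚ) (lam : Λ) : Set V :=
  {v | (∀ i, 0 ≤ rootQ i v) ∧ ι lam - v ∈ corootCone ι coroot}

theorem polytope_intersection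
    {Λ V : Type*} [AddCommGroup Λ] [AddCommGroup V] [Module ℚ V]
    {r : ℕ} (hr : 1 ≤ r)
    (ι : Λ →+ V) (hinj : Function.Injective ι)
    (hsat : ∀ v : V, ∃ n : ℕ, 0 < n ∧ (n : ℚ) • v ∈ Set.range ι)
    (coroot : Fin r → Λ)
    (hind : LinearIndependent ℚ fun i => ι (coroot i))
    (root : Fin r → Λ →+ ℤ) (rootQ : Fin r → V →ₗ[ℚ] ℚ)
    (hcompat : ∀ i x, rootQ i (ι x) = (root i x : ℚ))
    (hdiag : ∀ i, root i (coroot i) = 2)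
    (hoff : ∀ i j, i ≠ j → root i (coroot j) ≤ 0)
    (lam₁ lam₂ : Λ)
    (hdom₁ : ∀ i, 0 ≤ root i lam₁) (hdom₂ : ∀ i, 0 ≤ root i lam₂)
    (hdiff : ∃ c : Fin r → ℤ, lam₁ - lam₂ = ∑ i, c i • coroot i) :
    ∃ μ : Λ, (∀ i, 0 ≤ root i μ) ∧ leZ coroot μ lam₁ ∧ leZ coroot μ lam₂ ∧
      ({v : V | ι lam₁ - v ∈ corootCone ι coroot} ∩
          {v : V | ι lam₂ - v ∈ corootCone ι coroot}
        = {v : V | ι μ - v ∈ corootCone ι coroot}) ∧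
      Pset ι coroot rootQ lam₁ ∩ Pset ι coroot rootQ lam₂
        = Pset ι coroot rootQ μ := by
  obtain ⟨c, hc⟩ := hdiff
  set a : Fin r → ℕ := fun i => (c i).toNat with ha
  set b : Fin r → ℕ := fun i => (-(c i)).toNat with hb
  have hab : ∀ i, (a i : ℤ) - (b i : ℤ) = c i := by
    intro i; simp only [ha, hb]; omega
  have habz : ∀ i, a i = 0 ∨ b i = 0 := by
    intro i; simp only [ha, hb]; omega
  set μ : Λ := lam₁ - ∑ i, (a i : ℤ) • coroot i with hμ
  -- μ relative to lam₂
  have hμ2 : lam₂ - μ = ∑ i, (b i : ℤ) • coroot i := by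
    have : lam₂ - μ = (∑ i, (a i : ℤ) • coroot i) - (lam₁ - lam₂) := by
      rw [hμ]; abel
    rw [this, hc, ← Finset.sum_sub_distrib]
    congr 1; ext i
    rw [← sub_smul]
    congr 1
    have := hab i
    omega
  have hμ1 : lam₁ - μ = ∑ i, (a i : ℤ) • coroot i := by rw [hμ]; abel
  -- root values
  have rootsum : ∀ (j : Fin r) (d : Fin r → ℕ) (x : Λ),
      root j (x - ∑ i, (d i : ℤ) • coroot i)
        = root j x - ∑ i, (d i : ℤ) * root j (coroot i) := by
    intro j d x
    rw [map_sub, map_sum]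
    congr 1
    refine Finset.sum_congr rfl fun i _ => ?_
    rw [map_zsmul, smul_eq_mul]
  -- dominance of μ
  have hdom : ∀ j, 0 ≤ root j μ := by
    intro j
    rcases (habz j).symm.imp id id with hbj | haj
    · -- b j = 0 case? handle a j = 0 vs b j = 0 separately below
      -- use lam₂ expression : μ = lam₂ - ∑ b i • coroot i, with b j = 0
      have : μ = lam₂ - ∑ i, (b i : ℤ) • coroot i := by
        rw [← hμ2]; abel
      rw [this, rootsum]
      have hsum : ∑ i, (b i : ℤ) * root j (coroot i) ≤ 0 := by
        refine Finset.sum_nonpos fun i _ => ?_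
        rcases eq_or_ne i j with rfl | hne
        · simp [hbj]
        · exact mul_nonpos_iff.mpr (Or.inl ⟨Int.natCast_nonneg _, hoff j i (Ne.symm hne)⟩)
      have := hdom₂ j
      omega
    · -- a j = 0, use lam₁ expression
      rw [hμ, rootsum]
      have hsum : ∑ i, (a i : ℤ) * root j (coroot i) ≤ 0 := by
        refine Finset.sum_nonpos fun i _ => ?_
        rcases eq_or_ne i j with rfl | hne
        · simp [haj]
        · exact mul_nonpos_iff.mpr (Or.inl ⟨Int.natCast_nonneg _, hoff j i (Ne.symm hne)⟩)
      have := hdom₁ j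
      omega
  -- images in V
  have ιsum : ∀ (d : Fin r → ℕ) (x : Λ),
      ι (x - ∑ i, (d i : ℤ) • coroot i)
        = ι x - ∑ i, (d i : ℚ) • ι (coroot i) := by
    intro d x
    rw [map_sub, map_sum]
    congr 1
    refine Finset.sum_congr rfl fun i _ => ?_
    rw [map_zsmul, ← Int.cast_smul_eq_zsmul ℚ]
    norm_num
  have hιμ1 : ι lam₁ - ι μ = ∑ i, (a i : ℚ) • ι (coroot i) := by
    rw [hμ, ιsum]; abel
  have hιμ2 : ι lam₂ - ι μ = ∑ i, (b i : ℚ) • ι (coroot i) := by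
    have : ι lam₂ - ι μ = ι (lam₂ - μ) := (map_sub ι _ _).symm
    rw [this, hμ2, map_sum]
    refine Finset.sum_congr rfl fun i _ => ?_
    rw [map_zsmul, ← Int.cast_smul_eq_zsmul ℚ]
    norm_num
  -- main cone equality
  have hcone : {v : V | ι lam₁ - v ∈ corootCone ι coroot} ∩
          {v : V | ι lam₂ - v ∈ corootCone ι coroot}
        = {v : V | ι μ - v ∈ corootCone ι coroot} := by
    ext v
    constructor
    · rintro ⟨⟨x, hx0, hx⟩, ⟨y, hy0, hy⟩⟩
      refine ⟨fun i => x i - (a i : ℚ), fun i => ?_, ?_⟩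
      · show 0 ≤ x i - (a i : ℚ)
        -- nonnegativity: x i - a i = y i - b i, and one of a i, b i is 0
        have key : ∀ i, x i - (a i : ℚ) = y i - (b i : ℚ) := by
          have heq : ∑ i, ((x i - (a i : ℚ)) - (y i - (b i : ℚ))) • ι (coroot i) = 0 := by
            have e1 : ι μ - v = ∑ i, (x i - (a i : ℚ)) • ι (coroot i) := by
              have : ι μ - v = (ι lam₁ - v) - (ι lam₁ - ι μ) := by abel
              rw [this, hx, hιμ1, ← Finset.sum_sub_distrib]
              exact Finset.sum_congr rfl fun i _ => (sub_smul _ _ _).symm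
            have e2 : ι μ - v = ∑ i, (y i - (b i : ℚ)) • ι (coroot i) := by
              have : ι μ - v = (ι lam₂ - v) - (ι lam₂ - ι μ) := by abel
              rw [this, hy, hιμ2, ← Finset.sum_sub_distrib]
              exact Finset.sum_congr rfl fun i _ => (sub_smul _ _ _).symm
            rw [Finset.sum_congr rfl fun i _ => (sub_smul _ _ (ι (coroot i))),
              Finset.sum_sub_distrib, ← e1, ← e2, sub_self]
          intro i
          have := Fintype.linearIndependent_iff.mp hind _ heq i
          linarith [this]
        rcases habz i with h0 | h0
        · have := hx0 i; simp only [h0]; push_cast; linarith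
        · have := hy0 i; rw [key i, h0]; push_cast; linarith
      · have : ι μ - v = (ι lam₁ - v) - (ι lam₁ - ι μ) := by abel
        rw [this, hx, hιμ1, ← Finset.sum_sub_distrib]
        exact Finset.sum_congr rfl fun i _ => (sub_smul _ _ _).symm
    · rintro ⟨z, hz0, hz⟩
      constructor
      · refine ⟨fun i => z i + (a i : ℚ), fun i => by have := hz0 i; positivity, ?_⟩
        have : ι lam₁ - v = (ι μ - v) + (ι lam₁ - ι μ) := by abel
        rw [this, hz, hιμ1, ← Finset.sum_add_distrib]
        exact Finset.sum_congr rfl fun i _ => (add_smul _ _ _).symm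
      · refine ⟨fun i => z i + (b i : ℚ), fun i => by have := hz0 i; positivity, ?_⟩
        have : ι lam₂ - v = (ι μ - v) + (ι lam₂ - ι μ) := by abel
        rw [this, hz, hιμ2, ← Finset.sum_add_distrib]
        exact Finset.sum_congr rfl fun i _ => (add_smul _ _ _).symm
  refine ⟨μ, hdom, ⟨a, hμ1⟩, ⟨b, hμ2⟩, hcone, ?_⟩
  ext v
  have := Set.ext_iff.mp hcone v
  simp only [Set.mem_inter_iff, Set.mem_setOf_eq, Pset] at this ⊢
  tauto
end

section
/- Assume that every element of Λ lying in the ℚ-span of α₁^∨, …, α_r^∨ in Λ ⊗ ℚ lies in the ℤ-span of α₁^∨, …, α_r^∨. Then for any two dominant elements λ₁ ≠ λ₂ of Λ, the strata P_{λ₁}° and P_{λ₂}° are disjoint. (Paper's Corollary on the stratification of the dominant coweight cone by the sets P_λ°.) -/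
/-- The stratum `P_λ° = P_λ \ ⋃_{μ dominant, μ ≤ λ, μ ≠ λ} P_μ`. -/
def Pcirc {Λ V : Type*} [AddCommGroup Λ] [AddCommGroup V] [Module ℚ V]
    {r : ℕ} (ι : Λ →+ V) (coroot : Fin r → Λ)
    (root : Fin r → Λ →+ ℤ) (rootQ : Fin r → V →ₗ[ℚ] ℚ) (lam : Λ) : Set V :=
  Pset ι coroot rootQ lam \
    ⋃ (μ : Λ) (_ : ∀ i, 0 ≤ root i μ) (_ : leZ coroot μ lam) (_ : μ ≠ lam),
      Pset ι coroot rootQ μ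

theorem polytope_strata_disjoint
    {Λ V : Type*} [AddCommGroup Λ] [AddCommGroup V] [Module ℚ V]
    {r : ℕ} (hr : 1 ≤ r)
    (ι : Λ →+ V) (hinj : Function.Injective ι)
    (hsat : ∀ v : V, ∃ n : ℕ, 0 < n ∧ (n : ℚ) • v ∈ Set.range ι)
    (coroot : Fin r → Λ)
    (hind : LinearIndependent ℚ fun i => ι (coroot i))
    (root : Fin r → Λ →+ ℤ) (rootQ : Fin r → V →ₗ[ℚ] ℚ)
    (hcompat : ∀ i x, rootQ i (ι x) = (root i x : ℚ))
    (hdiag : ∀ i, root i (coroot i) = 2)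
    (hoff : ∀ i j, i ≠ j → root i (coroot j) ≤ 0)
    -- saturation: any element of `Λ` in the ℚ-span of the coroots lies in
    -- their ℤ-span
    (hlattice : ∀ x : Λ,
      ι x ∈ Submodule.span ℚ (Set.range fun i => ι (coroot i)) →
      ∃ c : Fin r → ℤ, x = ∑ i, c i • coroot i)
    (lam₁ lam₂ : Λ)
    (hdom₁ : ∀ i, 0 ≤ root i lam₁) (hdom₂ : ∀ i, 0 ≤ root i lam₂)
    (hne : lam₁ ≠ lam₂) :
    Pcirc ι coroot root rootQ lam₁ ∩ Pcirc ι coroot root rootQ lam₂ = ∅ := by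
  ext v
  simp only [Set.mem_inter_iff, Set.mem_empty_iff_false, iff_false, Pcirc,
    Set.mem_diff]
  rintro ⟨⟨hv1, hn1⟩, hv2, hn2⟩
  obtain ⟨hdomv, a, ha0, hae⟩ := hv1
  obtain ⟨-, b, hb0, hbe⟩ := hv2
  -- ι maps integer combinations to rational combinations
  have hiota : ∀ (m : Fin r → ℤ), ι (∑ i, m i • coroot i)
      = ∑ i, ((m i : ℚ)) • ι (coroot i) := by
    intro m
    rw [map_sum]
    refine Finset.sum_congr rfl fun i _ => ?_
    rw [map_zsmul, Int.cast_smul_eq_zsmul]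
  -- λ₁ - λ₂ lies in the ℚ-span of the coroots
  have hspan : ι (lam₁ - lam₂) ∈ Submodule.span ℚ (Set.range fun i => ι (coroot i)) := by
    have h1 : ι (lam₁ - lam₂) = ∑ i, (a i - b i) • ι (coroot i) := by
      rw [map_sub]
      have : ι lam₁ - ι lam₂ = (ι lam₁ - v) - (ι lam₂ - v) := by abel
      rw [this, hae, hbe, ← Finset.sum_sub_distrib]
      exact Finset.sum_congr rfl fun i _ => by rw [sub_smul]
    rw [h1]
    exact Submodule.sum_mem _ fun i _ =>
      Submodule.smul_mem _ _ (Submodule.subset_span ⟨i, rfl⟩)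
  obtain ⟨c, hc⟩ := hlattice _ hspan
  -- identify the rational coefficients
  have hcoef : ∀ i, a i - b i = (c i : ℚ) := by
    have h0 : ∑ i, (a i - b i - (c i : ℚ)) • ι (coroot i) = 0 := by
      have h1 : ∑ i, (a i - b i) • ι (coroot i) = ∑ i, ((c i : ℚ)) • ι (coroot i) := by
        rw [← hiota, ← hc, map_sub]
        have : ι lam₁ - ι lam₂ = (ι lam₁ - v) - (ι lam₂ - v) := by abel
        rw [this, hae, hbe, ← Finset.sum_sub_distrib]
        exact Finset.sum_congr rfl fun i _ => by rw [sub_smul]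
      calc ∑ i, (a i - b i - (c i : ℚ)) • ι (coroot i)
          = ∑ i, ((a i - b i) • ι (coroot i) - (c i : ℚ) • ι (coroot i)) :=
            Finset.sum_congr rfl fun i _ => sub_smul _ _ _
        _ = 0 := by rw [Finset.sum_sub_distrib, h1, sub_self]
    intro i
    have := Fintype.linearIndependent_iff.mp hind _ h0 i
    linarith [this]
  set pos : Fin r → ℕ := fun i => (c i).toNat with hposdef
  set neg : Fin r → ℕ := fun i => (-(c i)).toNat with hnegdef
  set μ : Λ := lam₁ - ∑ i, (pos i : ℤ) • coroot i with hμdef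
  have hle₁ : lam₁ - μ = ∑ i, (pos i : ℤ) • coroot i := by rw [hμdef]; abel
  have hle₂ : lam₂ - μ = ∑ i, (neg i : ℤ) • coroot i := by
    have hlam₂ : lam₂ = lam₁ - ∑ i, c i • coroot i := by
      have := hc; rw [← this]; abel
    rw [hμdef, hlam₂]
    have : (lam₁ - ∑ i, c i • coroot i) - (lam₁ - ∑ i, (pos i : ℤ) • coroot i)
        = ∑ i, ((pos i : ℤ) • coroot i - c i • coroot i) := by
      rw [Finset.sum_sub_distrib]; abel
    rw [this]
    refine Finset.sum_congr rfl fun i _ => ?_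
    rw [← sub_smul]
    congr 1
    simp only [hposdef, hnegdef]
    omega
  -- dominance of μ
  have hdomμ : ∀ j, 0 ≤ root j μ := by
    intro j
    rcases le_or_gt (c j) 0 with h | h
    · have heq : root j μ = root j lam₁ - ∑ i, (pos i : ℤ) * root j (coroot i) := by
        rw [hμdef, map_sub, map_sum]
        congr 1
        exact Finset.sum_congr rfl fun i _ => by rw [map_zsmul, smul_eq_mul]
      have hsum : ∑ i, (pos i : ℤ) * root j (coroot i) ≤ 0 := by
        refine Finset.sum_nonpos fun i _ => ?_
        rcases eq_or_ne i j with rfl | hij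
        · have : pos i = 0 := by simp only [hposdef]; omega
          simp [this]
        · exact mul_nonpos_of_nonneg_of_nonpos (by positivity) (hoff j i (Ne.symm hij))
      have := hdom₁ j
      omega
    · have hμ2 : μ = lam₂ - ∑ i, (neg i : ℤ) • coroot i := by
        rw [← hle₂]; abel
      have heq : root j μ = root j lam₂ - ∑ i, (neg i : ℤ) * root j (coroot i) := by
        rw [hμ2, map_sub, map_sum]
        congr 1
        exact Finset.sum_congr rfl fun i _ => by rw [map_zsmul, smul_eq_mul]
      have hsum : ∑ i, (neg i : ℤ) * root j (coroot i) ≤ 0 := by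
        refine Finset.sum_nonpos fun i _ => ?_
        rcases eq_or_ne i j with rfl | hij
        · have : neg i = 0 := by simp only [hnegdef]; omega
          simp [this]
        · exact mul_nonpos_of_nonneg_of_nonpos (by positivity) (hoff j i (Ne.symm hij))
      have := hdom₂ j
      omega
  -- v ∈ P_μ
  have hvμ : v ∈ Pset ι coroot rootQ μ := by
    refine ⟨hdomv, fun i => a i - (pos i : ℚ), fun i => ?_, ?_⟩
    · show 0 ≤ a i - (pos i : ℚ)
      rcases le_or_gt (c i) 0 with h | h
      · have : pos i = 0 := by simp only [hposdef]; omega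
        simp [this, ha0 i]
      · have h1 : (pos i : ℚ) = (c i : ℚ) := by
          simp only [hposdef]
          norm_cast
          omega
        have := hcoef i
        have := hb0 i
        rw [h1]
        linarith
    · have h1 : ι μ = ι lam₁ - ∑ i, ((pos i : ℤ) : ℚ) • ι (coroot i) := by
        rw [hμdef, map_sub, hiota]
      rw [h1]
      have : ι lam₁ - ∑ i, ((pos i : ℤ) : ℚ) • ι (coroot i) - v
          = (ι lam₁ - v) - ∑ i, ((pos i : ℤ) : ℚ) • ι (coroot i) := by abel
      rw [this, hae, ← Finset.sum_sub_distrib]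
      refine Finset.sum_congr rfl fun i _ => ?_
      rw [← sub_smul]
      norm_num
  -- μ is strictly below λ₁ or λ₂
  rcases eq_or_ne μ lam₁ with h1 | h1
  · refine hn2 ?_
    simp only [Set.mem_iUnion]
    exact ⟨μ, hdomμ, ⟨neg, hle₂⟩, h1 ▸ hne, hvμ⟩
  · refine hn1 ?_
    simp only [Set.mem_iUnion]
    exact ⟨μ, hdomμ, ⟨pos, hle₁⟩, h1, hvμ⟩
end

section
/- Let λ, λ' ∈ Λ be dominant with λ − λ' in the ℤ-span of α₁^∨, …, α_r^∨, and let μ ∈ Λ be a dominant element with μ ≤ λ, μ ≤ λ' and (λ − D) ∩ (λ' − D) = μ − D. Then ω_i(μ) = min(ω_i(λ), ω_i(λ')) for every 1 ≤ i ≤ r. (This is the combinatorial content of the paper's Proposition that 𝔠_{≤λ} ∩ 𝔠_{≤λ'} = 𝔠_{≤μ} for the strata of the Steinberg base.) -/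
theorem fundamental_weight_min
    {Λ V : Type*} [AddCommGroup Λ] [AddCommGroup V] [Module ℚ V]
    {r : ℕ} (hr : 1 ≤ r)
    (ι : Λ →+ V) (hinj : Function.Injective ι)
    (hsat : ∀ v : V, ∃ n : ℕ, 0 < n ∧ (n : ℚ) • v ∈ Set.range ι)
    (coroot : Fin r → Λ)
    (hind : LinearIndependent ℚ fun i => ι (coroot i))
    (root : Fin r → Λ →+ ℤ) (rootQ : Fin r → V →ₗ[ℚ] ℚ)
    (hcompat : ∀ i x, rootQ i (ι x) = (root i x : ℚ))
    (hdiag : ∀ i, root i (coroot i) = 2)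
    (hoff : ∀ i j, i ≠ j → root i (coroot j) ≤ 0)
    -- the fundamental weights
    (omega : Fin r → Λ →+ ℤ)
    (homega : ∀ i j, omega i (coroot j) = if i = j then 1 else 0)
    (lam lam' : Λ)
    (hdom : ∀ i, 0 ≤ root i lam) (hdom' : ∀ i, 0 ≤ root i lam')
    (hdiff : ∃ c : Fin r → ℤ, lam - lam' = ∑ i, c i • coroot i)
    (μ : Λ) (hμdom : ∀ i, 0 ≤ root i μ)
    (hle : leZ coroot μ lam) (hle' : leZ coroot μ lam')
    (hinter : {v : V | ι lam - v ∈ corootCone ι coroot} ∩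
        {v : V | ι lam' - v ∈ corootCone ι coroot}
      = {v : V | ι μ - v ∈ corootCone ι coroot}) :
    ∀ i, omega i μ = min (omega i lam) (omega i lam') := by
  obtain ⟨a, ha⟩ := hle
  obtain ⟨b, hb⟩ := hle'
  -- transfer the integral relations to V
  have hιsub : ∀ (x y : Λ) (c : Fin r → ℕ), x - y = ∑ i, (c i : ℤ) • coroot i →
      ι x - ι y = ∑ i, (c i : ℚ) • ι (coroot i) := by
    intro x y c h
    rw [← map_sub, h, map_sum]
    refine Finset.sum_congr rfl fun i _ => ?_
    rw [map_zsmul, ← Int.cast_smul_eq_zsmul ℚ]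
    norm_cast
  have haV := hιsub lam μ a ha
  have hbV := hιsub lam' μ b hb
  set m : Fin r → ℚ := fun i => ((min (a i) (b i) : ℕ) : ℚ) with hm
  have hm0 : ∀ i, 0 ≤ m i := fun i => Nat.cast_nonneg _
  set v : V := ι μ + ∑ i, m i • ι (coroot i) with hv
  have h1 : v ∈ {v : V | ι lam - v ∈ corootCone ι coroot} := by
    refine ⟨fun i => (a i : ℚ) - m i, fun i => ?_, ?_⟩
    · have : m i ≤ (a i : ℚ) := by
        simp only [hm]; exact_mod_cast min_le_left (a i) (b i)
      show (0:ℚ) ≤ (a i : ℚ) - m i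
      linarith
    · rw [hv, show ι lam - (ι μ + ∑ i, m i • ι (coroot i))
          = (ι lam - ι μ) - ∑ i, m i • ι (coroot i) by abel, haV,
        ← Finset.sum_sub_distrib]
      exact Finset.sum_congr rfl fun i _ => (sub_smul _ _ _).symm
  have h2 : v ∈ {v : V | ι lam' - v ∈ corootCone ι coroot} := by
    refine ⟨fun i => (b i : ℚ) - m i, fun i => ?_, ?_⟩
    · have : m i ≤ (b i : ℚ) := by
        simp only [hm]; exact_mod_cast min_le_right (a i) (b i)
      show (0:ℚ) ≤ (b i : ℚ) - m i
      linarith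
    · rw [hv, show ι lam' - (ι μ + ∑ i, m i • ι (coroot i))
          = (ι lam' - ι μ) - ∑ i, m i • ι (coroot i) by abel, hbV,
        ← Finset.sum_sub_distrib]
      exact Finset.sum_congr rfl fun i _ => (sub_smul _ _ _).symm
  have hvμ : v ∈ {v : V | ι μ - v ∈ corootCone ι coroot} := by
    rw [← hinter]; exact ⟨h1, h2⟩
  obtain ⟨d, hd0, hdeq⟩ := hvμ
  have hzero : ∑ i, (d i + m i) • ι (coroot i) = 0 := by
    have : ι μ - v = -∑ i, m i • ι (coroot i) := by rw [hv]; abel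
    rw [this] at hdeq
    have : ∑ i, d i • ι (coroot i) + ∑ i, m i • ι (coroot i) = 0 := by
      rw [← hdeq]; abel
    rw [← Finset.sum_add_distrib] at this
    rw [← this]
    exact Finset.sum_congr rfl fun i _ => add_smul _ _ _
  have key : ∀ i, min (a i) (b i) = 0 := by
    intro i
    have := Fintype.linearIndependent_iff.mp hind (fun i => d i + m i) hzero i
    have hmi : m i = 0 := le_antisymm (by linarith [hd0 i]) (hm0 i)
    have hmi' : ((min (a i) (b i) : ℕ) : ℚ) = 0 := hmi
    exact_mod_cast hmi'
  -- omega computations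
  have hω : ∀ (x y : Λ) (c : Fin r → ℕ), x - y = ∑ j, (c j : ℤ) • coroot j →
      ∀ i, omega i x - omega i y = c i := by
    intro x y c h i
    rw [← map_sub, h, map_sum]
    rw [Finset.sum_congr rfl fun j _ => by rw [map_zsmul, homega i j]]
    simp [Finset.sum_ite_eq, mul_ite]
  intro i
  have h1 := hω lam μ a ha i
  have h2 := hω lam' μ b hb i
  have h3 := key i
  omega
end

section
/- Let λ, λ' ∈ Λ be dominant with λ − λ' in the ℤ-span of α₁^∨, …, α_r^∨, and let μ ∈ Λ be a dominant element with μ ≤ λ, μ ≤ λ' and (λ − D) ∩ (λ' − D) = μ − D. Then C_λ ∩ C_{λ'} = C_μ as subsets of F^r. (Paper's Proposition that the subsets 𝔠_{≤λ} of the Steinberg base over the Laurent series field satisfy 𝔠_{≤λ} ∩ 𝔠_{≤λ'} = 𝔠_{≤μ}, stated in the coordinates given by the fundamental representations.) -/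
/-- The subset `𝔠_{≤λ} = {c ∈ F^r : ord(c_i) ≥ -ω_i(λ)}` of `F^r`,
where `F = k((ϖ))` is the field of formal Laurent series. -/
def Cset {Λ : Type*} [AddCommGroup Λ] {r : ℕ} (omega : Fin r → Λ →+ ℤ)
    (k : Type*) [Field k] (lam : Λ) : Set (Fin r → LaurentSeries k) :=
  {c | ∀ i, c i ≠ 0 → -(omega i lam) ≤ (c i).order}

theorem steinberg_strata_intersection
    {Λ V : Type*} [AddCommGroup Λ] [AddCommGroup V] [Module ℚ V]
    {r : ℕ} (hr : 1 ≤ r)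
    (ι : Λ →+ V) (hinj : Function.Injective ι)
    (hsat : ∀ v : V, ∃ n : ℕ, 0 < n ∧ (n : ℚ) • v ∈ Set.range ι)
    (coroot : Fin r → Λ)
    (hind : LinearIndependent ℚ fun i => ι (coroot i))
    (root : Fin r → Λ →+ ℤ) (rootQ : Fin r → V →ₗ[ℚ] ℚ)
    (hcompat : ∀ i x, rootQ i (ι x) = (root i x : ℚ))
    (hdiag : ∀ i, root i (coroot i) = 2)
    (hoff : ∀ i j, i ≠ j → root i (coroot j) ≤ 0)
    -- the fundamental weights
    (omega : Fin r → Λ →+ ℤ)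
    (homega : ∀ i j, omega i (coroot j) = if i = j then 1 else 0)
    (k : Type*) [Field k]
    (lam lam' : Λ)
    (hdom : ∀ i, 0 ≤ root i lam) (hdom' : ∀ i, 0 ≤ root i lam')
    (hdiff : ∃ c : Fin r → ℤ, lam - lam' = ∑ i, c i • coroot i)
    (μ : Λ) (hμdom : ∀ i, 0 ≤ root i μ)
    (hle : leZ coroot μ lam) (hle' : leZ coroot μ lam')
    (hinter : {v : V | ι lam - v ∈ corootCone ι coroot} ∩
        {v : V | ι lam' - v ∈ corootCone ι coroot}
      = {v : V | ι μ - v ∈ corootCone ι coroot}) :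
    Cset omega k lam ∩ Cset omega k lam' = Cset omega k μ := by

  obtain ⟨a, ha⟩ := hle
  obtain ⟨b, hb⟩ := hle'
  have hwa : ∀ (x : Λ) (c : Fin r → ℕ), x - μ = ∑ j, (c j : ℤ) • coroot j →
      ∀ i, omega i x - omega i μ = c i := by
    intro x c hx i
    have := congrArg (omega i) hx
    simpa [map_sub, map_sum, map_zsmul, homega, smul_eq_mul, mul_ite, mul_one, mul_zero,
      Finset.sum_ite_eq] using this
  have key : ∀ (x : Λ) (c : Fin r → ℕ) (i : Fin r),
      x - μ = ∑ j, (c j : ℤ) • coroot j → 1 ≤ c i →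
      ι x - (ι μ + ι (coroot i)) ∈ corootCone ι coroot := by
    intro x c i hx hci
    refine ⟨fun j => (c j : ℚ) - if j = i then 1 else 0, ?_, ?_⟩
    · intro j
      by_cases h : j = i
      · subst h
        simp only [if_pos rfl, sub_nonneg]
        exact_mod_cast hci
      · simp [h]
    · have h1 : ι (x - μ) = ∑ j, ((c j : ℚ)) • ι (coroot j) := by
        rw [hx, map_sum]
        refine Finset.sum_congr rfl fun j _ => ?_
        rw [map_zsmul, ← Int.cast_smul_eq_zsmul ℚ]
        norm_num
      have h2 : ι x - (ι μ + ι (coroot i)) = ι (x - μ) - ι (coroot i) := by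
        rw [map_sub]; abel
      rw [h2, h1]
      rw [Finset.sum_congr rfl (fun j _ => sub_smul ((c j : ℚ)) _ (ι (coroot j))),
        Finset.sum_sub_distrib]
      congr 1
      simp [ite_smul, Finset.sum_ite_eq']
  have hmin : ∀ i, omega i μ = min (omega i lam) (omega i lam') := by
    intro i
    have h1 := hwa lam a ha i
    have h2 := hwa lam' b hb i
    have hzero : a i = 0 ∨ b i = 0 := by
      by_contra h
      push_neg at h
      have hai : 1 ≤ a i := Nat.one_le_iff_ne_zero.2 h.1
      have hbi : 1 ≤ b i := Nat.one_le_iff_ne_zero.2 h.2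
      have hmem : (ι μ + ι (coroot i)) ∈ {v : V | ι μ - v ∈ corootCone ι coroot} := by
        rw [← hinter]
        exact ⟨key lam a i ha hai, key lam' b i hb hbi⟩
      obtain ⟨d, hd0, hdeq⟩ := hmem
      have heq : ∑ j, (d j + if j = i then 1 else 0) • ι (coroot j) = 0 := by
        rw [Finset.sum_congr rfl (fun j _ => add_smul (d j) _ (ι (coroot j))),
          Finset.sum_add_distrib]
        have : (∑ j, (if j = i then (1:ℚ) else 0) • ι (coroot j)) = ι (coroot i) := by
          simp [ite_smul, Finset.sum_ite_eq']
        rw [this, ← hdeq]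
        abel
      have := linearIndependent_iff'.1 hind Finset.univ _ heq i (Finset.mem_univ i)
      simp at this
      have := hd0 i
      linarith
    rcases hzero with h | h
    · rw [h] at h1
      have : omega i μ = omega i lam := by omega
      rw [this]
      symm
      apply min_eq_left
      omega
    · rw [h] at h2
      have : omega i μ = omega i lam' := by omega
      rw [this]
      symm
      apply min_eq_right
      omega
  ext c
  simp only [Cset, Set.mem_inter_iff, Set.mem_setOf_eq]
  constructor
  · rintro ⟨h1, h2⟩ i hi
    rw [hmin i]
    have := h1 i hi
    have := h2 i hi
    omega
  · intro h
    constructor <;> intro i hi <;> have hh := h i hi <;> rw [hmin i] at hh <;> omega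
end

section
/- For any two dominant elements λ₁ ≠ λ₂ of Λ with λ₁ − λ₂ in the ℤ-span of α₁^∨, …, α_r^∨, the strata C_{λ₁}° and C_{λ₂}° are disjoint subsets of F^r. (Paper's Corollary on the stratification of the Steinberg base 𝔠(F) by the sets 𝔠_λ°, restricted to a fixed value of the determinant.) -/
/-- The stratum `𝔠_λ° = 𝔠_{≤λ} \ ⋃_{μ dominant, μ ≤ λ, μ ≠ λ} 𝔠_{≤μ}`. -/
def Ccirc {Λ : Type*} [AddCommGroup Λ] {r : ℕ} (coroot : Fin r → Λ)
    (root : Fin r → Λ →+ ℤ) (omega : Fin r → Λ →+ ℤ)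
    (k : Type*) [Field k] (lam : Λ) : Set (Fin r → LaurentSeries k) :=
  Cset omega k lam \
    ⋃ (μ : Λ) (_ : ∀ i, 0 ≤ root i μ) (_ : leZ coroot μ lam) (_ : μ ≠ lam),
      Cset omega k μ

theorem steinberg_strata_disjoint
    {Λ V : Type*} [AddCommGroup Λ] [AddCommGroup V] [Module ℚ V]
    {r : ℕ} (hr : 1 ≤ r)
    (ι : Λ →+ V) (hinj : Function.Injective ι)
    (hsat : ∀ v : V, ∃ n : ℕ, 0 < n ∧ (n : ℚ) • v ∈ Set.range ι)
    (coroot : Fin r → Λ)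
    (hind : LinearIndependent ℚ fun i => ι (coroot i))
    (root : Fin r → Λ →+ ℤ) (rootQ : Fin r → V →ₗ[ℚ] ℚ)
    (hcompat : ∀ i x, rootQ i (ι x) = (root i x : ℚ))
    (hdiag : ∀ i, root i (coroot i) = 2)
    (hoff : ∀ i j, i ≠ j → root i (coroot j) ≤ 0)
    -- the fundamental weights
    (omega : Fin r → Λ →+ ℤ)
    (homega : ∀ i j, omega i (coroot j) = if i = j then 1 else 0)
    (k : Type*) [Field k]
    (lam₁ lam₂ : Λ)
    (hdom₁ : ∀ i, 0 ≤ root i lam₁) (hdom₂ : ∀ i, 0 ≤ root i lam₂)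
    (hne : lam₁ ≠ lam₂)
    (hdiff : ∃ c : Fin r → ℤ, lam₁ - lam₂ = ∑ i, c i • coroot i) :
    Ccirc coroot root omega k lam₁ ∩ Ccirc coroot root omega k lam₂ = ∅ := by
  ext x
  simp only [Set.mem_inter_iff, Set.mem_empty_iff_false, iff_false]
  rintro ⟨⟨hx1, hn1⟩, hx2, hn2⟩
  obtain ⟨c, hc⟩ := hdiff
  set μ : Λ := lam₁ - ∑ i, (max (c i) 0) • coroot i with hμdef
  have h1eq : lam₁ - μ = ∑ i, (max (c i) 0) • coroot i := by
    rw [hμdef]; abel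
  have h2eq : lam₂ - μ = ∑ i, (max (-(c i)) 0) • coroot i := by
    have h : lam₂ - μ = (∑ i, (max (c i) 0) • coroot i) - (lam₁ - lam₂) := by
      rw [hμdef]; abel
    rw [h, hc, ← Finset.sum_sub_distrib]
    refine Finset.sum_congr rfl fun i _ => ?_
    rw [← sub_smul]
    congr 1
    omega
  -- values of omega on μ
  have homegac : ∀ i (m : Fin r → ℤ),
      omega i (∑ j, m j • coroot j) = m i := by
    intro i m
    rw [map_sum, Finset.sum_eq_single i]
    · rw [map_zsmul, homega, if_pos rfl, smul_eq_mul, mul_one]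
    · intro j _ hji
      rw [map_zsmul, homega, if_neg (fun h => hji h.symm), smul_eq_mul, mul_zero]
    · simp
  have homega1 : ∀ i, omega i μ = omega i lam₁ - max (c i) 0 := by
    intro i
    have := homegac i (fun j => max (c j) 0)
    rw [← h1eq, map_sub] at this
    omega
  have homega2 : ∀ i, omega i μ = omega i lam₂ - max (-(c i)) 0 := by
    intro i
    have := homegac i (fun j => max (-(c j)) 0)
    rw [← h2eq, map_sub] at this
    omega
  -- dominance of μ
  have hdomμ : ∀ j, 0 ≤ root j μ := by
    intro j
    rcases le_or_gt 0 (c j) with hcj | hcj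
    · have hμ2 : μ = lam₂ - ∑ i, (max (-(c i)) 0) • coroot i := by
        rw [← h2eq]; abel
      have hsum : ∑ i, root j ((max (-(c i)) 0) • coroot i) ≤ 0 := by
        apply Finset.sum_nonpos
        intro i _
        rw [map_zsmul, smul_eq_mul]
        by_cases hij : i = j
        · subst hij
          have : max (-(c i)) 0 = 0 := max_eq_right (by omega)
          rw [this, zero_mul]
        · exact mul_nonpos_of_nonneg_of_nonpos (le_max_right _ _)
            (hoff j i (fun h => hij h.symm))
      rw [hμ2, map_sub, map_sum]
      have := hdom₂ j
      omega
    · have hsum : ∑ i, root j ((max (c i) 0) • coroot i) ≤ 0 := by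
        apply Finset.sum_nonpos
        intro i _
        rw [map_zsmul, smul_eq_mul]
        by_cases hij : i = j
        · subst hij
          have : max (c i) 0 = 0 := max_eq_right (by omega)
          rw [this, zero_mul]
        · exact mul_nonpos_of_nonneg_of_nonpos (le_max_right _ _)
            (hoff j i (fun h => hij h.symm))
      rw [hμdef, map_sub, map_sum]
      have := hdom₁ j
      omega
  -- x lies in the smaller set C_μ
  have hxμ : x ∈ Cset omega k μ := by
    intro i hxi
    rcases le_or_gt 0 (c i) with h | h
    · have hci : omega i (lam₁ - lam₂) = c i := by
        rw [hc]; exact homegac i c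
      rw [map_sub] at hci
      have : omega i μ = omega i lam₂ := by
        have := homega1 i; omega
      rw [this]; exact hx2 i hxi
    · have : omega i μ = omega i lam₁ := by
        have := homega1 i; omega
      rw [this]; exact hx1 i hxi
  -- μ ≤ λ₁ and μ ≤ λ₂
  have hle1 : leZ coroot μ lam₁ := by
    refine ⟨fun i => (max (c i) 0).toNat, ?_⟩
    rw [h1eq]
    refine Finset.sum_congr rfl fun i _ => ?_
    rw [Int.toNat_of_nonneg (le_max_right _ _)]
  have hle2 : leZ coroot μ lam₂ := by
    refine ⟨fun i => (max (-(c i)) 0).toNat, ?_⟩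
    rw [h2eq]
    refine Finset.sum_congr rfl fun i _ => ?_
    rw [Int.toNat_of_nonneg (le_max_right _ _)]
  by_cases hμ1 : μ = lam₁
  · have hμ2 : μ ≠ lam₂ := by rw [hμ1]; exact hne
    apply hn2
    simp only [Set.mem_iUnion]
    exact ⟨μ, hdomμ, hle2, hμ2, hxμ⟩
  · apply hn1
    simp only [Set.mem_iUnion]
    exact ⟨μ, hdomμ, hle1, hμ1, hxμ⟩
end

section
/- Assume that every element of Λ lying in the ℚ-span of α₁^∨, …, α_r^∨ in Λ ⊗ ℚ lies in the ℤ-span of α₁^∨, …, α_r^∨. Let ν ∈ Λ ⊗ ℚ be dominant and suppose there exists a dominant λ₀ ∈ Λ with ν ≤_ℚ λ₀. Then there exists a unique dominant μ ∈ Λ such that ν ≤_ℚ μ and μ ≤ λ for every dominant λ ∈ Λ with ν ≤_ℚ λ (a unique smallest dominant integral coweight dominating ν). Moreover, ν ∈ P_μ°, and μ is the unique dominant element of Λ with ν ∈ P_μ°. (Paper's Lemma on the best integral approximation of the Newton point, Lemma "integral-approximation-lem", conditions (1) and (2).) -/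
section helpers

variable {Λ V : Type*} [AddCommGroup Λ] [AddCommGroup V] [Module ℚ V]
    {r : ℕ} (ι : Λ →+ V) (coroot : Fin r → Λ)

lemma iota_zsum (d : Fin r → ℤ) :
    ι (∑ i, d i • coroot i) = ∑ i, (d i : ℚ) • ι (coroot i) := by
  rw [map_sum]
  refine Finset.sum_congr rfl fun i _ => ?_
  rw [map_zsmul, Int.cast_smul_eq_zsmul]

lemma coeff_eq (hind : LinearIndependent ℚ fun i => ι (coroot i))
    {c c' : Fin r → ℚ}
    (h : ∑ i, c i • ι (coroot i) = ∑ i, c' i • ι (coroot i)) : c = c' := by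
  funext i
  have h0 : ∑ j, (c j - c' j) • ι (coroot j) = 0 := by
    simp only [sub_smul, Finset.sum_sub_distrib, h, sub_self]
  have h1 := Fintype.linearIndependent_iff.mp hind _ h0 i
  have : c i - c' i = 0 := h1
  linarith

lemma leZ_trans {a b c : Λ} (h1 : leZ coroot a b) (h2 : leZ coroot b c) :
    leZ coroot a c := by
  obtain ⟨n, hn⟩ := h1
  obtain ⟨m, hm⟩ := h2
  refine ⟨n + m, ?_⟩
  have : c - a = (c - b) + (b - a) := by abel
  rw [this, hn, hm, ← Finset.sum_add_distrib]
  refine Finset.sum_congr rfl fun i _ => ?_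
  simp only [Pi.add_apply]
  push_cast
  rw [add_smul]
  abel

lemma leZ_antisymm (hind : LinearIndependent ℚ fun i => ι (coroot i))
    {a b : Λ} (h1 : leZ coroot a b) (h2 : leZ coroot b a) : a = b := by
  obtain ⟨n, hn⟩ := h1
  obtain ⟨m, hm⟩ := h2
  have h0 : (0 : V) = ∑ i, ((n i : ℚ) + (m i : ℚ)) • ι (coroot i) := by
    have : (0 : Λ) = (b - a) + (a - b) := by abel
    have h0' : (0:V) = ι ((b-a) + (a-b)) := by rw [← this]; simp
    rw [map_add, hn, hm, iota_zsum, iota_zsum, ← Finset.sum_add_distrib] at h0'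
    rw [h0']
    refine Finset.sum_congr rfl fun i _ => ?_
    rw [← add_smul]
    push_cast
    ring_nf
  have hz : (fun _ => (0:ℚ)) = fun i => ((n i : ℚ) + (m i : ℚ)) := by
    apply coeff_eq ι coroot hind
    simpa using h0
  have hn0 : ∀ i, n i = 0 := by
    intro i
    have hni : (0:ℚ) = (n i : ℚ) + (m i : ℚ) := congrFun hz i
    have hn1 : (0:ℚ) ≤ (n i : ℚ) := by positivity
    have hn2 : (0:ℚ) ≤ (m i : ℚ) := by positivity
    have : (n i : ℚ) = 0 := by linarith
    exact_mod_cast this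
  have hba : b - a = 0 := by
    rw [hn]
    apply Finset.sum_eq_zero
    intro i _
    rw [hn0 i]
    simp
  exact (sub_eq_zero.mp hba).symm

lemma dom_sub (root : Fin r → Λ →+ ℤ)
    (hoff : ∀ i j, i ≠ j → root i (coroot j) ≤ 0)
    (lam : Λ) (k : Fin r → ℤ) (hk : ∀ j, 0 ≤ k j)
    (i : Fin r) (hdl : 0 ≤ root i lam) (hki : k i = 0) :
    0 ≤ root i (lam - ∑ j, k j • coroot j) := by
  rw [map_sub, map_sum]
  have hs : ∑ j, root i (k j • coroot j) ≤ 0 := by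
    apply Finset.sum_nonpos
    intro j _
    rw [map_zsmul, smul_eq_mul]
    rcases eq_or_ne j i with h | h
    · subst h; rw [hki]; simp
    · exact mul_nonpos_of_nonneg_of_nonpos (hk j) (hoff i j (Ne.symm h))
  linarith

lemma meet_lemma (hind : LinearIndependent ℚ fun i => ι (coroot i))
    (root : Fin r → Λ →+ ℤ)
    (hoff : ∀ i j, i ≠ j → root i (coroot j) ≤ 0)
    (hlattice : ∀ x : Λ,
      ι x ∈ Submodule.span ℚ (Set.range fun i => ι (coroot i)) →
      ∃ c : Fin r → ℤ, x = ∑ i, c i • coroot i)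
    (ν : V) (lam lam' : Λ)
    (h1d : ∀ i, 0 ≤ root i lam) (h2d : ∀ i, 0 ≤ root i lam')
    (h1c : ι lam - ν ∈ corootCone ι coroot)
    (h2c : ι lam' - ν ∈ corootCone ι coroot) :
    ∃ z : Λ, (∀ i, 0 ≤ root i z) ∧ ι z - ν ∈ corootCone ι coroot ∧
      leZ coroot z lam ∧ leZ coroot z lam' := by
  obtain ⟨c, hc0, hcc⟩ := h1c
  obtain ⟨c', hc'0, hcc'⟩ := h2c
  have hx : ι (lam - lam') = ∑ i, (c i - c' i) • ι (coroot i) := by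
    rw [map_sub, show ι lam - ι lam' = (ι lam - ν) - (ι lam' - ν) by abel,
      hcc, hcc', ← Finset.sum_sub_distrib]
    simp [sub_smul]
  have hspan : ι (lam - lam') ∈ Submodule.span ℚ (Set.range fun i => ι (coroot i)) := by
    rw [hx]
    exact Submodule.sum_mem _ fun i _ =>
      Submodule.smul_mem _ _ (Submodule.subset_span ⟨i, rfl⟩)
  obtain ⟨d, hd⟩ := hlattice _ hspan
  have hdq : ∀ i, (d i : ℚ) = c i - c' i := by
    have h1 : ι (lam - lam') = ∑ i, (d i : ℚ) • ι (coroot i) := by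
      rw [hd, iota_zsum]
    have h2 : (fun i => (d i : ℚ)) = fun i => c i - c' i := by
      funext i
      have h0 : ∑ j, ((d j : ℚ) - (c j - c' j)) • ι (coroot j) = 0 := by
        calc ∑ j, ((d j : ℚ) - (c j - c' j)) • ι (coroot j)
            = ∑ j, (d j : ℚ) • ι (coroot j) - ∑ j, (c j - c' j) • ι (coroot j) := by
              rw [← Finset.sum_sub_distrib]
              exact Finset.sum_congr rfl fun j _ => sub_smul _ _ _
          _ = 0 := by rw [← h1, ← hx, sub_self]
      have := Fintype.linearIndependent_iff.mp hind _ h0 i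
      have hh : (d i : ℚ) - (c i - c' i) = 0 := this
      linarith
    exact fun i => congrFun h2 i
  set z : Λ := lam - ∑ j, (max (d j) 0) • coroot j with hz
  have hlamz : lam - z = ∑ j, (max (d j) 0) • coroot j := by rw [hz]; abel
  have hlam'z : lam' - z = ∑ j, (max (d j) 0 - d j) • coroot j := by
    have : lam' - z = (lam - z) - (lam - lam') := by abel
    rw [this, hlamz, hd, ← Finset.sum_sub_distrib]
    refine Finset.sum_congr rfl fun j _ => ?_
    rw [sub_smul]
  refine ⟨z, ?_, ?_, ?_, ?_⟩
  · intro i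
    rcases le_total (d i) 0 with h | h
    · exact dom_sub coroot root hoff lam _ (fun j => le_max_right _ _) i (h1d i)
        (max_eq_right h)
    · have hz2 : z = lam' - ∑ j, (max (d j) 0 - d j) • coroot j := by
        rw [← hlam'z]; abel
      rw [hz2]
      exact dom_sub coroot root hoff lam' _
        (fun j => sub_nonneg.mpr (le_max_left _ _)) i (h2d i)
        (by rw [max_eq_left h, sub_self])
  · refine ⟨fun j => c j - (max (d j) 0 : ℤ), ?_, ?_⟩
    · intro j
      have hmle : ((max (d j) 0 : ℤ) : ℚ) ≤ c j := by
        rcases le_total (d j) 0 with h | h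
        · rw [max_eq_right h]
          simpa using hc0 j
        · rw [max_eq_left h, hdq j]
          linarith [hc'0 j]
      simp only []
      linarith
    · have : ι z - ν = (ι lam - ν) - ι (∑ j, (max (d j) 0) • coroot j) := by
        rw [hz, map_sub]; abel
      rw [this, hcc, iota_zsum, ← Finset.sum_sub_distrib]
      refine Finset.sum_congr rfl fun j _ => ?_
      rw [sub_smul]
  · refine ⟨fun j => (max (d j) 0).toNat, ?_⟩
    rw [hlamz]
    refine Finset.sum_congr rfl fun j _ => ?_
    rw [Int.toNat_of_nonneg (le_max_right _ _)]
  · refine ⟨fun j => (max (d j) 0 - d j).toNat, ?_⟩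
    rw [hlam'z]
    refine Finset.sum_congr rfl fun j _ => ?_
    rw [Int.toNat_of_nonneg (sub_nonneg.mpr (le_max_left _ _))]

end helpers

theorem best_integral_approximation
    {Λ V : Type*} [AddCommGroup Λ] [AddCommGroup V] [Module ℚ V]
    {r : ℕ} (hr : 1 ≤ r)
    (ι : Λ →+ V) (hinj : Function.Injective ι)
    (hsat : ∀ v : V, ∃ n : ℕ, 0 < n ∧ (n : ℚ) • v ∈ Set.range ι)
    (coroot : Fin r → Λ)
    (hind : LinearIndependent ℚ fun i => ι (coroot i))
    (root : Fin r → Λ →+ ℤ) (rootQ : Fin r → V →ₗ[ℚ] ℚ)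
    (hcompat : ∀ i x, rootQ i (ι x) = (root i x : ℚ))
    (hdiag : ∀ i, root i (coroot i) = 2)
    (hoff : ∀ i j, i ≠ j → root i (coroot j) ≤ 0)
    -- saturation: any element of `Λ` in the ℚ-span of the coroots lies in
    -- their ℤ-span
    (hlattice : ∀ x : Λ,
      ι x ∈ Submodule.span ℚ (Set.range fun i => ι (coroot i)) →
      ∃ c : Fin r → ℤ, x = ∑ i, c i • coroot i)
    (ν : V) (hν : ∀ i, 0 ≤ rootQ i ν)
    (hbound : ∃ lam₀ : Λ, (∀ i, 0 ≤ root i lam₀) ∧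
      ι lam₀ - ν ∈ corootCone ι coroot) :
    ∃ μ : Λ,
      -- μ is dominant, ν ≤_ℚ μ, and μ is smallest such integral coweight
      ((∀ i, 0 ≤ root i μ) ∧ ι μ - ν ∈ corootCone ι coroot ∧
        ∀ lam : Λ, (∀ i, 0 ≤ root i lam) → ι lam - ν ∈ corootCone ι coroot →
          leZ coroot μ lam) ∧
      -- μ is the unique such element
      (∀ μ' : Λ, ((∀ i, 0 ≤ root i μ') ∧ ι μ' - ν ∈ corootCone ι coroot ∧
        ∀ lam : Λ, (∀ i, 0 ≤ root i lam) → ι lam - ν ∈ corootCone ι coroot →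
          leZ coroot μ' lam) → μ' = μ) ∧
      -- moreover ν ∈ P_μ°
      ν ∈ Pcirc ι coroot root rootQ μ ∧
      -- and μ is the unique dominant element with ν ∈ P_μ°
      (∀ lam : Λ, (∀ i, 0 ≤ root i lam) →
        ν ∈ Pcirc ι coroot root rootQ lam → lam = μ) := by
  classical
  obtain ⟨lam₀, hlam₀d, hlam₀c⟩ := hbound
  set S' : Set ℕ := {N | ∃ μ : Λ, ∃ n : Fin r → ℕ,
    (∀ i, 0 ≤ root i μ) ∧ ι μ - ν ∈ corootCone ι coroot ∧
    lam₀ - μ = ∑ i, (n i : ℤ) • coroot i ∧ N = ∑ i, n i} with hS'def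
  have hne : S'.Nonempty := ⟨0, lam₀, 0, hlam₀d, hlam₀c, by simp, by simp⟩
  obtain ⟨e, he0, hee⟩ := hlam₀c
  have hbdd : BddAbove S' := by
    refine ⟨⌈∑ i, e i⌉₊, fun N hN => ?_⟩
    obtain ⟨μ, n, hdμ, hcμ, hrep, hNn⟩ := hN
    obtain ⟨c, hc0, hcc⟩ := hcμ
    have h1 : ι (lam₀ - μ) = ∑ i, ((n i : ℤ) : ℚ) • ι (coroot i) := by
      rw [hrep, iota_zsum]
    have h2 : ι (lam₀ - μ) = ∑ i, (e i - c i) • ι (coroot i) := by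
      rw [map_sub, show ι lam₀ - ι μ = (ι lam₀ - ν) - (ι μ - ν) by abel,
        hee, hcc, ← Finset.sum_sub_distrib]
      simp [sub_smul]
    have h3 := coeff_eq ι coroot hind (h1.symm.trans h2)
    have h4 : (N : ℚ) ≤ ∑ i, e i := by
      have hNq : (N : ℚ) = ∑ i, ((n i : ℤ) : ℚ) := by
        rw [hNn]; push_cast; rfl
      rw [hNq]
      refine Finset.sum_le_sum fun i _ => ?_
      have := congrFun h3 i
      have := hc0 i
      have h5 : ((n i : ℤ) : ℚ) = e i - c i := congrFun h3 i
      linarith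
    have h6 : (N : ℚ) ≤ (⌈∑ i, e i⌉₊ : ℚ) := h4.trans (Nat.le_ceil _)
    exact_mod_cast h6
  have hmem := Nat.sSup_mem hne hbdd
  obtain ⟨μ, nstar, hdμ, hcμ, hrepμ, hNμ⟩ := hmem
  have hmin : ∀ lam : Λ, (∀ i, 0 ≤ root i lam) → ι lam - ν ∈ corootCone ι coroot →
      leZ coroot μ lam := by
    intro lam hld hlc
    obtain ⟨z, hzd, hzc, hzμ, hzlam⟩ :=
      meet_lemma ι coroot hind root hoff hlattice ν μ lam hdμ hld hcμ hlc
    obtain ⟨k, hk⟩ := hzμ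
    have hz0 : lam₀ - z = ∑ i, ((nstar i + k i : ℕ) : ℤ) • coroot i := by
      have : lam₀ - z = (lam₀ - μ) + (μ - z) := by abel
      rw [this, hrepμ, hk, ← Finset.sum_add_distrib]
      refine Finset.sum_congr rfl fun i _ => ?_
      push_cast
      rw [add_smul]
    have hin : (∑ i, (nstar i + k i)) ∈ S' :=
      ⟨z, fun i => nstar i + k i, hzd, hzc, hz0, rfl⟩
    have hle := le_csSup hbdd hin
    rw [hNμ] at hle
    rw [Finset.sum_add_distrib] at hle
    have hks : ∑ i, k i = 0 := by omega
    have hk0 : ∀ i ∈ Finset.univ, k i = 0 := Finset.sum_eq_zero_iff.mp hks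
    have hμz : μ = z := by
      have hsub : μ - z = 0 := by
        rw [hk]
        apply Finset.sum_eq_zero
        intro i hi
        rw [hk0 i hi]
        simp
      exact sub_eq_zero.mp hsub
    rw [hμz]
    exact hzlam
  have hcμ' : ι μ - ν ∈ corootCone ι coroot := hcμ
  refine ⟨μ, ⟨hdμ, hcμ', hmin⟩, ?_, ?_, ?_⟩
  · -- uniqueness of the minimum
    rintro μ' ⟨hdμ', hcμ'', hmin'⟩
    exact leZ_antisymm ι coroot hind (hmin' μ hdμ hcμ') (hmin μ' hdμ' hcμ'')
  · -- ν ∈ Pcirc μ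
    refine ⟨⟨hν, hcμ'⟩, ?_⟩
    intro hmemU
    simp only [Set.mem_iUnion] at hmemU
    obtain ⟨μ'', hd'', hle'', hne'', hP''⟩ := hmemU
    have hμμ'' : leZ coroot μ μ'' := hmin μ'' hd'' hP''.2
    exact hne'' (leZ_antisymm ι coroot hind hle'' hμμ'')
  · -- uniqueness of the stratum
    intro lam hld hPc
    obtain ⟨⟨_, hclam⟩, hnot⟩ := hPc
    have hμlam : leZ coroot μ lam := hmin lam hld hclam
    by_contra hne'
    apply hnot
    simp only [Set.mem_iUnion]
    exact ⟨μ, hdμ, hμlam, fun h => hne' (h ▸ rfl), hν, hcμ'⟩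
end

section
/- The quotient V[[s]] / N is a finite-dimensional k-vector space and 2 · dim_k ( V[[s]] / N ) = e · ( dim_k V − dim_k ker(g − id_V) ). (This is the key computation in the proof of the paper's theorem that dim X_γ^{λ,reg} = ⟨ρ,λ⟩ + (d(γ) − c(γ))/2: with V = 𝔱, g = w_γ the order-e Weyl element attached to γ, the quotient 𝔱 ⊗ Õ / (M ⊗_𝒪 Õ) has k-dimension (e/2)·c(γ), where c(γ) = dim 𝔱 − dim 𝔱^{w_γ}.) -/
/-!
Since `g ^ e = 1` and `ζ` is a primitive `e`-th root of unity, `V` is the direct sum of the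
eigenspaces `V_j` of `g` for the eigenvalues `ζ ^ j`, `j : Fin e`. In a basis adapted to this
splitting, a series `∑ xₙ sⁿ` in `V_j[[s]]` is fixed by `g ⊗ σ` iff `xₙ = 0` unless
`n + j ≡ 0 (mod e)`; hence `N = ⨁_j s ^ n_j V_j[[s]]` with `n_j = (-j) mod e`, and
`dim V[[s]] / N = ∑_j n_j dim V_j`. As `g` preserves `B`, the form pairs `V_j` nondegenerately
with `V_{-j}`, so `dim V_j = dim V_{-j}`; since `n_j + n_{-j} = e` for `j ≠ 0`, twice the sum is
`e ∑_{j ≠ 0} dim V_j = e (dim V - dim V^g)`.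
-/

/-- The rescaling `f(s) ↦ f(ζ s)`, i.e. the `k`-algebra automorphism `σ` of
`k[[s]]` with `σ(s) = ζ s`, as a `k`-linear map. -/
noncomputable def rescaleL (k : Type*) [CommRing k] (ζ : k) :
    PowerSeries k →ₗ[k] PowerSeries k where
  toFun := PowerSeries.rescale ζ
  map_add' f g := map_add _ f g
  map_smul' c f := by
    ext n
    simp [PowerSeries.coeff_rescale, PowerSeries.coeff_smul, smul_eq_mul,
      mul_left_comm]

open Finset Module Module.End

section RootsOfUnity

variable {k : Type*} [Field k] {e : ℕ} {ζ : k}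

lemma IsPrimitiveRoot.geom_sum_pow_eq_zero (hζ : IsPrimitiveRoot ζ e) {n : ℕ} (hn₀ : n ≠ 0)
    (hn : n < e) : ∑ j ∈ range e, (ζ ^ n) ^ j = 0 := by
  rw [geom_sum_eq (hζ.pow_ne_one_of_pos_of_lt hn₀ hn), ← pow_mul, mul_comm, pow_mul,
    hζ.pow_eq_one, one_pow, sub_self, zero_div]

variable [NeZero e]

lemma Fin.val_neg_add_val (j : Fin e) : ((-j : Fin e) : ℕ) + j = if j = 0 then 0 else e := by
  rw [Fin.val_neg]
  split_ifs with h
  · simp [h]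
  · have := j.isLt; omega

lemma IsPrimitiveRoot.pow_mul_pow_val_neg (hζ : IsPrimitiveRoot ζ e) (j : Fin e) :
    ζ ^ (j : ℕ) * ζ ^ ((-j : Fin e) : ℕ) = 1 := by
  rw [← pow_add, add_comm, Fin.val_neg_add_val]
  split_ifs
  exacts [pow_zero ζ, hζ.pow_eq_one]

lemma IsPrimitiveRoot.pow_mul_pow_ne_one (hζ : IsPrimitiveRoot ζ e) (j : Fin e) {m : ℕ}
    (hm : m < ((-j : Fin e) : ℕ)) : ζ ^ (j : ℕ) * ζ ^ m ≠ 1 := by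
  have hj := Fin.val_neg_add_val j
  split_ifs at hj with h0
  · omega
  · rw [← pow_add]
    have hj₀ : (j : ℕ) ≠ 0 := fun h => h0 (Fin.ext h)
    exact hζ.pow_ne_one_of_pos_of_lt (by omega) (by omega)

end RootsOfUnity

section Eigenspaces

variable {k V : Type*} [Field k] [AddCommGroup V] [Module k V] {e : ℕ} {ζ : k} {g : End k V}

lemma mul_geom_sum_of_pow_eq_one {R : Type*} [Ring R] {h : R} (hh : h ^ e = 1) :
    h * ∑ n ∈ range e, h ^ n = ∑ n ∈ range e, h ^ n := by
  have := mul_geom_sum h e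
  rwa [hh, sub_self, sub_mul, one_mul, sub_eq_zero] at this

lemma geom_sum_smul_apply_mem_eigenspace (hge : g ^ e = 1) {μ : k} (hμ : μ ^ e = 1)
    (hμ₀ : μ ≠ 0) (x : V) : (∑ n ∈ range e, (μ⁻¹ • g) ^ n) x ∈ eigenspace g μ := by
  have hfix := mul_geom_sum_of_pow_eq_one (h := μ⁻¹ • g) (by rw [smul_pow, hge, inv_pow, hμ,
    inv_one, one_smul])
  rw [mem_eigenspace_iff]
  calc g ((∑ n ∈ range e, (μ⁻¹ • g) ^ n) x)
      = μ • (μ⁻¹ • g * ∑ n ∈ range e, (μ⁻¹ • g) ^ n) x := by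
        rw [Module.End.mul_apply, LinearMap.smul_apply, smul_inv_smul₀ hμ₀]
    _ = μ • (∑ n ∈ range e, (μ⁻¹ • g) ^ n) x := by rw [hfix]

theorem iSup_eigenspace_pow_eq_top [NeZero e] (hζ : IsPrimitiveRoot ζ e) (hge : g ^ e = 1) :
    ⨆ j : Fin e, eigenspace g (ζ ^ (j : ℕ)) = ⊤ := by
  have he : (e : k) ≠ 0 := hζ.neZero'.out
  have hsum : ∑ j : Fin e, ∑ n ∈ range e, ((ζ ^ (j : ℕ))⁻¹ • g) ^ n = (e : k) • 1 := by
    simp only [smul_pow, ← inv_pow, ← pow_mul]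
    rw [Fin.sum_univ_eq_sum_range (fun j => ∑ n ∈ range e, (ζ⁻¹ ^ (j * n)) • g ^ n), sum_comm]
    rw [sum_eq_single_of_mem 0 (mem_range.2 (Nat.pos_of_neZero e))]
    · simp [Nat.cast_smul_eq_nsmul]
    · intro n hn hn₀
      simp_rw [← sum_smul, mul_comm, pow_mul, hζ.inv.geom_sum_pow_eq_zero hn₀ (mem_range.1 hn),
        zero_smul]
  refine eq_top_iff.2 fun x _ => ?_
  have hx : x = (e : k)⁻¹ • ∑ j : Fin e, (∑ n ∈ range e, ((ζ ^ (j : ℕ))⁻¹ • g) ^ n) x := by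
    rw [← LinearMap.sum_apply, hsum, LinearMap.smul_apply, inv_smul_smul₀ he, one_apply]
  rw [hx]
  refine Submodule.smul_mem _ _ (Submodule.sum_mem _ fun j _ => ?_)
  exact Submodule.mem_iSup_of_mem j (geom_sum_smul_apply_mem_eigenspace hge
    (by rw [← pow_mul, mul_comm, pow_mul, hζ.pow_eq_one, one_pow])
    (pow_ne_zero _ (hζ.ne_zero (NeZero.ne e))) x)

end Eigenspaces

section Duality

variable {k V : Type*} [Field k] [AddCommGroup V] [Module k V] {g : End k V}
  {B : V →ₗ[k] V →ₗ[k] k}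

lemma apply_eq_zero_of_mem_eigenspace (hgB : ∀ x y, B (g x) (g y) = B x y) {μ ν : k}
    (hμν : μ * ν ≠ 1) {x y : V} (hx : x ∈ eigenspace g μ) (hy : y ∈ eigenspace g ν) :
    B x y = 0 := by
  have h : B x y = μ * ν * B x y := by
    conv_lhs => rw [← hgB, mem_eigenspace_iff.1 hx, mem_eigenspace_iff.1 hy]
    simp only [map_smul, LinearMap.smul_apply, smul_eq_mul]
    ring
  have h' : (μ * ν - 1) * B x y = 0 := by linear_combination -h
  exact (mul_eq_zero.1 h').resolve_left (sub_ne_zero.2 hμν)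

/-- `B` pairs the `μ`-eigenspace nondegenerately with the `μ⁻¹`-eigenspace, since it kills
every other pair of eigenspaces. -/
lemma finrank_eigenspace_le_of_mul_eq_one [FiniteDimensional k V]
    (hnd : ∀ x, (∀ y, B x y = 0) → x = 0) (hgB : ∀ x y, B (g x) (g y) = B x y)
    (htop : ⨆ μ, eigenspace g μ = ⊤) {μ ν : k} (hμν : μ * ν = 1) :
    finrank k (eigenspace g μ) ≤ finrank k (eigenspace g ν) := by
  let φ : eigenspace g μ →ₗ[k] Dual k (eigenspace g ν) :=
    (B.domRestrict _).compl₂ (Submodule.subtype _)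
  have hφ : Function.Injective φ := by
    refine (injective_iff_map_eq_zero φ).2 fun x hx => Subtype.ext (hnd x fun y => ?_)
    suffices ⨆ c, eigenspace g c ≤ LinearMap.ker (B x) by
      exact LinearMap.mem_ker.1 (this (htop ▸ Submodule.mem_top))
    refine iSup_le fun c z hz => LinearMap.mem_ker.2 ?_
    by_cases hc : c = ν
    · subst hc
      exact LinearMap.congr_fun hx ⟨z, hz⟩
    · refine apply_eq_zero_of_mem_eigenspace hgB (fun h => hc ?_) x.2 hz
      exact mul_left_cancel₀ (left_ne_zero_of_mul_eq_one hμν) (h.trans hμν.symm)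
  calc finrank k (eigenspace g μ) ≤ finrank k (Dual k (eigenspace g ν)) :=
        LinearMap.finrank_le_finrank_of_injective hφ
    _ = finrank k (eigenspace g ν) := Subspace.dual_finrank_eq

lemma finrank_eigenspace_eq_of_mul_eq_one [FiniteDimensional k V]
    (hnd : ∀ x, (∀ y, B x y = 0) → x = 0) (hgB : ∀ x y, B (g x) (g y) = B x y)
    (htop : ⨆ μ, eigenspace g μ = ⊤) {μ ν : k} (hμν : μ * ν = 1) :
    finrank k (eigenspace g μ) = finrank k (eigenspace g ν) :=
  (finrank_eigenspace_le_of_mul_eq_one hnd hgB htop hμν).antisymm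
    (finrank_eigenspace_le_of_mul_eq_one hnd hgB htop (by rwa [mul_comm]))

end Duality

lemma Fin.two_mul_sum_val_neg_mul {e : ℕ} [NeZero e] (d : Fin e → ℕ) (hd : ∀ j, d (-j) = d j) :
    2 * ∑ j, ((-j : Fin e) : ℕ) * d j = e * (∑ j, d j - d 0) := by
  have hneg : ∑ j, ((-j : Fin e) : ℕ) * d j = ∑ j : Fin e, (j : ℕ) * d j :=
    Fintype.sum_equiv (Equiv.neg _) _ _ fun j => by simp [hd]
  have hsplit : ∑ j, d j = d 0 + ∑ j ∈ univ.erase 0, d j := (add_sum_erase _ _ (mem_univ 0)).symm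
  calc 2 * ∑ j, ((-j : Fin e) : ℕ) * d j
      = ∑ j, (((-j : Fin e) : ℕ) + j) * d j := by
        rw [two_mul]; nth_rw 2 [hneg]; simp only [← sum_add_distrib, add_mul]
    _ = ∑ j ∈ univ.erase 0, e * d j := by
        rw [← add_sum_erase _ _ (mem_univ 0)]
        simp only [Fin.val_neg_add_val, ite_mul, zero_mul, if_pos, zero_add]
        exact sum_congr rfl fun j hj => if_neg (ne_of_mem_erase hj)
    _ = e * (∑ j, d j - d 0) := by rw [← mul_sum, hsplit, Nat.add_sub_cancel_left]

section XPowSubmodule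

open PowerSeries

variable {R M ι : Type*} [CommRing R] [AddCommGroup M] [Module R⟦X⟧ M] (b : Basis ι R⟦X⟧ M)
  (n : ι → ℕ)

namespace Module.Basis

/-- The submodule `⨁ᵢ R⟦X⟧ ∙ X ^ n i • b i`. -/
noncomputable def xPowSubmodule : Submodule R⟦X⟧ M :=
  ⨅ i, Submodule.comap (b.coord i) (Ideal.span {X ^ n i})

variable {b n} in
lemma mem_xPowSubmodule {w : M} : w ∈ b.xPowSubmodule n ↔ ∀ i, X ^ n i ∣ b.repr w i := by
  simp [xPowSubmodule, Submodule.mem_iInf, Ideal.mem_span_singleton]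

variable [Module R M] [IsScalarTower R R⟦X⟧ M]

noncomputable def truncCoords : M →ₗ[R] ((i : ι) → Fin (n i) → R) :=
  LinearMap.pi fun i => LinearMap.pi fun m => (coeff (m : ℕ)).comp ((b.coord i).restrictScalars R)

@[simp]
lemma truncCoords_apply (w : M) (i : ι) (m : Fin (n i)) :
    b.truncCoords n w i m = coeff (m : ℕ) (b.repr w i) :=
  rfl

lemma ker_truncCoords :
    LinearMap.ker (b.truncCoords n) = (b.xPowSubmodule n).restrictScalars R := by
  ext w
  simp [mem_xPowSubmodule, X_pow_dvd_iff, funext_iff, Fin.forall_iff]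

lemma truncCoords_surjective [Finite ι] : Function.Surjective (b.truncCoords n) := by
  intro t
  refine ⟨b.equivFun.symm fun i =>
    PowerSeries.mk fun m => if h : m < n i then t i ⟨m, h⟩ else 0, ?_⟩
  ext i m
  simp [← b.equivFun_apply]

noncomputable def quotientXPowSubmoduleEquiv [Finite ι] :
    (M ⧸ (b.xPowSubmodule n).restrictScalars R) ≃ₗ[R] ((i : ι) → Fin (n i) → R) :=
  (Submodule.quotEquivOfEq _ _ (b.ker_truncCoords n).symm).trans
    ((b.truncCoords n).quotKerEquivOfSurjective (b.truncCoords_surjective n))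

instance finite_quotient_xPowSubmodule [Finite ι] :
    Module.Finite R (M ⧸ (b.xPowSubmodule n).restrictScalars R) :=
  Module.Finite.equiv (b.quotientXPowSubmoduleEquiv n).symm

lemma finrank_quotient_xPowSubmodule [Nontrivial R] [Fintype ι] :
    finrank R (M ⧸ (b.xPowSubmodule n).restrictScalars R) = ∑ i, n i := by
  rw [(b.quotientXPowSubmoduleEquiv n).finrank_eq, finrank_pi_fintype]
  simp

end Module.Basis

end XPowSubmodule

lemma Module.Basis.repr_apply_of_apply_eq_smul {R M ι : Type*} [CommSemiring R] [AddCommMonoid M]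
    [Module R M] (b : Basis ι R M) {f : M →ₗ[R] M} {c : ι → R} (hf : ∀ i, f (b i) = c i • b i)
    (v : M) (i : ι) : b.repr (f v) i = c i * b.repr v i := by
  have : (b.coord i).comp f = c i • b.coord i := b.ext fun j => by
    by_cases h : j = i <;> simp [hf, h]
  exact LinearMap.congr_fun this v

section FixedPoints

open PowerSeries TensorProduct

variable {k V ι : Type*} [Field k] [AddCommGroup V] [Module k V] {ζ : k} {g : End k V}
  {b : Basis ι k V} {c : ι → k}

lemma repr_baseChange_map_rescaleL (hgb : ∀ i, g (b i) = c i • b i) (w : k⟦X⟧ ⊗[k] V) (i : ι) :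
    (b.baseChange k⟦X⟧).repr (map (rescaleL k ζ) g w) i
      = c i • rescale ζ ((b.baseChange k⟦X⟧).repr w i) := by
  induction w using TensorProduct.induction_on with
  | zero => simp
  | tmul f v =>
    rw [map_tmul, Basis.baseChange_repr_tmul, Basis.baseChange_repr_tmul,
      b.repr_apply_of_apply_eq_smul hgb, ← smul_smul]
    exact congr_arg (c i • ·) ((rescaleL k ζ).map_smul _ f).symm
  | add w₁ w₂ h₁ h₂ => simp only [map_add, Finsupp.coe_add, Pi.add_apply, h₁, h₂, smul_add]

lemma coeff_repr_eq_zero_of_map_rescaleL_eq_self (hgb : ∀ i, g (b i) = c i • b i)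
    {w : k⟦X⟧ ⊗[k] V} (hw : map (rescaleL k ζ) g w = w) {i : ι} {m : ℕ}
    (hm : c i * ζ ^ m ≠ 1) : coeff m ((b.baseChange k⟦X⟧).repr w i) = 0 := by
  have h := congr_arg (coeff m) (repr_baseChange_map_rescaleL (ζ := ζ) hgb w i)
  rw [hw, coeff_smul, coeff_rescale, smul_eq_mul, ← mul_assoc] at h
  have h' : (c i * ζ ^ m - 1) * coeff m ((b.baseChange k⟦X⟧).repr w i) = 0 := by
    linear_combination -h
  exact (mul_eq_zero.1 h').resolve_left (sub_ne_zero.2 hm)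

lemma map_rescaleL_X_pow_smul (hgb : ∀ i, g (b i) = c i • b i) {i : ι} {n : ℕ}
    (hn : c i * ζ ^ n = 1) :
    map (rescaleL k ζ) g ((X : k⟦X⟧) ^ n • b.baseChange k⟦X⟧ i)
      = (X : k⟦X⟧) ^ n • b.baseChange k⟦X⟧ i := by
  rw [Basis.baseChange_apply, smul_tmul', smul_eq_mul, mul_one, map_tmul, hgb, tmul_smul,
    smul_tmul']
  congr 1
  change c i • rescale ζ (X ^ n) = X ^ n
  rw [map_pow, rescale_X, mul_pow, ← map_pow, ← smul_eq_C_mul, smul_smul, hn, one_smul]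

theorem span_fixedPoints_eq_xPowSubmodule [Fintype ι] (hgb : ∀ i, g (b i) = c i • b i)
    {n : ι → ℕ} (hn : ∀ i, c i * ζ ^ n i = 1) (hlt : ∀ i, ∀ m < n i, c i * ζ ^ m ≠ 1) :
    Submodule.span k⟦X⟧ {w | map (rescaleL k ζ) g w = w}
      = (b.baseChange k⟦X⟧).xPowSubmodule n := by
  refine le_antisymm (Submodule.span_le.2 fun w hw => ?_) fun w hw => ?_
  · exact Basis.mem_xPowSubmodule.2 fun i => X_pow_dvd_iff.2 fun m hm =>
      coeff_repr_eq_zero_of_map_rescaleL_eq_self hgb hw (hlt i m hm)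
  · rw [← (b.baseChange k⟦X⟧).sum_repr w]
    refine Submodule.sum_mem _ fun i _ => ?_
    obtain ⟨q, hq⟩ := Basis.mem_xPowSubmodule.1 hw i
    rw [hq, mul_comm, mul_smul]
    exact Submodule.smul_mem _ q (Submodule.subset_span (map_rescaleL_X_pow_smul hgb (hn i)))

end FixedPoints

lemma DirectSum.IsInternal.finrank_eq_sum {k V ι : Type*} [Field k] [AddCommGroup V] [Module k V]
    [FiniteDimensional k V] [Fintype ι] [DecidableEq ι] {E : ι → Submodule k V}
    (h : DirectSum.IsInternal E) : finrank k V = ∑ i, finrank k (E i) := by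
  rw [← (LinearEquiv.ofBijective (DirectSum.coeLinearMap E) h).finrank_eq, finrank_directSum]

section Quotient

open PowerSeries TensorProduct

variable {k V : Type*} [Field k] [AddCommGroup V] [Module k V] {e : ℕ} [NeZero e] {ζ : k}
  {g : End k V}

theorem isInternal_eigenspace_pow (hζ : IsPrimitiveRoot ζ e) (hge : g ^ e = 1) :
    DirectSum.IsInternal fun j : Fin e => eigenspace g (ζ ^ (j : ℕ)) :=
  DirectSum.isInternal_submodule_of_iSupIndep_of_iSup_eq_top
    ((eigenspaces_iSupIndep g).comp fun j j' h => Fin.ext (hζ.pow_inj j.isLt j'.isLt h))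
    (iSup_eigenspace_pow_eq_top hζ hge)

theorem finiteDimensional_and_finrank_quotient_span_fixedPoints [FiniteDimensional k V]
    (hζ : IsPrimitiveRoot ζ e) (hge : g ^ e = 1) :
    let N := (Submodule.span k⟦X⟧ {w | map (rescaleL k ζ) g w = w}).restrictScalars k
    FiniteDimensional k (k⟦X⟧ ⊗[k] V ⧸ N) ∧
      finrank k (k⟦X⟧ ⊗[k] V ⧸ N)
        = ∑ j : Fin e, ((-j : Fin e) : ℕ) * finrank k (eigenspace g (ζ ^ (j : ℕ))) := by
  classical
  let E := fun j : Fin e => eigenspace g (ζ ^ (j : ℕ))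
  have hE : DirectSum.IsInternal E := isInternal_eigenspace_pow hζ hge
  let b := hE.collectedBasis fun j => Free.chooseBasis k (E j)
  have hgb : ∀ i, g (b i) = ζ ^ (i.1 : ℕ) • b i := fun i =>
    mem_eigenspace_iff.1 (hE.collectedBasis_mem _ i)
  rw [span_fixedPoints_eq_xPowSubmodule hgb (n := fun i => ((-i.1 : Fin e) : ℕ))
    (fun i => hζ.pow_mul_pow_val_neg i.1) (fun i _ hm => hζ.pow_mul_pow_ne_one i.1 hm)]
  refine ⟨inferInstance, ?_⟩
  rw [Basis.finrank_quotient_xPowSubmodule, Fintype.sum_sigma]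
  simp [E, finrank_eq_card_chooseBasisIndex, mul_comm]

end Quotient

theorem dim_quotient_fixed_points_general
    {k : Type*} [Field k] {e : ℕ} (he : 1 ≤ e) {ζ : k}
    (hζ : IsPrimitiveRoot ζ e)
    {V : Type*} [AddCommGroup V] [Module k V] [FiniteDimensional k V]
    (B : V →ₗ[k] V →ₗ[k] k)
    (hnd : ∀ x, (∀ y, B x y = 0) → x = 0)
    (g : V →ₗ[k] V)
    (hge : g ^ e = LinearMap.id)
    (hgB : ∀ x y, B (g x) (g y) = B x y)
    -- `N` is the `k[[s]]`-submodule of `V[[s]] = k[[s]] ⊗_k V` generated by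
    -- the fixed points `M` of `g ⊗ σ`
    (N : Submodule (PowerSeries k) (TensorProduct k (PowerSeries k) V))
    (hN : N = Submodule.span (PowerSeries k)
        {w : TensorProduct k (PowerSeries k) V |
          TensorProduct.map (rescaleL k ζ) g w = w}) :
    FiniteDimensional k
        (TensorProduct k (PowerSeries k) V ⧸ N.restrictScalars k) ∧
      2 * Module.finrank k
          (TensorProduct k (PowerSeries k) V ⧸ N.restrictScalars k)
        = e * (Module.finrank k V
            - Module.finrank k (LinearMap.ker (g - LinearMap.id))) := by
  have : NeZero e := ⟨by omega⟩
  subst hN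
  obtain ⟨hfin, hrank⟩ := finiteDimensional_and_finrank_quotient_span_fixedPoints hζ hge
  refine ⟨hfin, ?_⟩
  let d := fun j : Fin e => finrank k (eigenspace g (ζ ^ (j : ℕ)))
  have htop : ⨆ μ, eigenspace g μ = ⊤ :=
    top_unique ((iSup_eigenspace_pow_eq_top hζ hge).ge.trans (iSup_le fun j => le_iSup _ _))
  have hd : ∀ j, d (-j) = d j := fun j => finrank_eigenspace_eq_of_mul_eq_one hnd hgB htop
    (by rw [mul_comm]; exact hζ.pow_mul_pow_val_neg j)
  have hker : LinearMap.ker (g - LinearMap.id) = eigenspace g (ζ ^ ((0 : Fin e) : ℕ)) := by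
    rw [Fin.val_zero, pow_zero, eigenspace_def, one_smul]
    rfl
  rw [hrank, Fin.two_mul_sum_val_neg_mul d hd, (isInternal_eigenspace_pow hζ hge).finrank_eq_sum,
    hker]

theorem dim_quotient_fixed_points
    {k : Type*} [Field k] {e : ℕ} (he : 1 ≤ e) {ζ : k}
    (hζ : IsPrimitiveRoot ζ e)
    {V : Type*} [AddCommGroup V] [Module k V] [FiniteDimensional k V]
    (B : V →ₗ[k] V →ₗ[k] k)
    (hsymm : ∀ x y, B x y = B y x)
    (hnd : ∀ x, (∀ y, B x y = 0) → x = 0)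
    (g : V →ₗ[k] V)
    (hge : g ^ e = LinearMap.id)
    (hgB : ∀ x y, B (g x) (g y) = B x y)
    -- `N` is the `k[[s]]`-submodule of `V[[s]] = k[[s]] ⊗_k V` generated by
    -- the fixed points `M` of `g ⊗ σ`
    (N : Submodule (PowerSeries k) (TensorProduct k (PowerSeries k) V))
    (hN : N = Submodule.span (PowerSeries k)
        {w : TensorProduct k (PowerSeries k) V |
          TensorProduct.map (rescaleL k ζ) g w = w}) :
    FiniteDimensional k
        (TensorProduct k (PowerSeries k) V ⧸ N.restrictScalars k) ∧
      2 * Module.finrank k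
          (TensorProduct k (PowerSeries k) V ⧸ N.restrictScalars k)
        = e * (Module.finrank k V
            - Module.finrank k (LinearMap.ker (g - LinearMap.id))) :=
  dim_quotient_fixed_points_general he hζ B hnd g hge hgB N hN
end
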